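/- Closed form of the q-coherent state expansion: for every real ζ with q(1−q)ζ² < 1 and every real x, the series Σ_{n=0}^∞ (ζ^n/√(n!_{q,α})) · φ_n^α(x;q) converges and equals c_α · √(ω_α(x;q)) · e_{q²}(−q(1−q)ζ²) · E_{q,α}(q^{1/2}(1−q)^{1/2} x ζ), where e_{q²}(z) = Σ_{k=0}^∞ z^k/(q²;q²)_k and E_{q,α}(z) = Σ_{k=0}^∞ q^{k(k−1)/2} z^k/(q;q)_{k,α}. -/

import Mathlib

open scoped BigOperators
open Real Filter

noncomputable section

/-- q-shifted factorial `(a;q)_n`. -/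
def qPoch (a q : ℝ) (n : ℕ) : ℝ := ∏ k ∈ Finset.range n, (1 - a * q ^ k)

/-- infinite q-shifted factorial `(a;q)_∞`. -/
def qPochInf (a q : ℝ) : ℝ := ∏' k : ℕ, (1 - a * q ^ k)

/-- q-number `⟦x⟧_q = (1-q^x)/(1-q)`. -/
def qNumber (q x : ℝ) : ℝ := (1 - q ^ x) / (1 - q)

/-- generalized q-integer `⟦n⟧_{q,α}`: equals `⟦n⟧_q` for even `n` and
`⟦n+2α+1⟧_q` for odd `n` (so `⟦2m+1⟧_{q,α} = ⟦2m+2α+2⟧_q`). -/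
def qNumAlpha (q α : ℝ) (n : ℕ) : ℝ :=
  if n % 2 = 0 then qNumber q n else qNumber q (n + 2 * α + 1)

/-- generalized q-factorial `n!_{q,α}`. -/
def qFactAlpha (q α : ℝ) (n : ℕ) : ℝ := ∏ k ∈ Finset.range n, qNumAlpha q α (k + 1)

/-- generalized q-shifted factorial `(q;q)_{n,α} = (1-q)^n n!_{q,α}`. -/
def qPochAlpha (q α : ℝ) (n : ℕ) : ℝ := (1 - q) ^ n * qFactAlpha q α n

/-- generalized discrete q-Hermite II polynomials `h̃_{n,α}(x;q)`. -/
def hTilde (q α : ℝ) (n : ℕ) (x : ℝ) : ℝ :=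
  qPoch q q n * ∑ k ∈ Finset.range (n / 2 + 1),
    (-1 : ℝ) ^ k * q ^ ((k * (2 * k + 1) : ℤ) - (2 * n * k : ℤ)) * x ^ (n - 2 * k) /
      (qPoch (q ^ 2) (q ^ 2) k * qPochAlpha q α (n - 2 * k))

/-- the weight `ω_α(x;q) = e_{q²}(-q^{-2α-1}x²) = 1/∏_{k≥0}(1+q^{-2α-1}x²q^{2k})`. -/
def omegaAlpha (q α x : ℝ) : ℝ :=
  (∏' k : ℕ, (1 + q ^ (-(2 * α + 1)) * x ^ 2 * q ^ (2 * k)))⁻¹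

/-- normalization constant `c_α`. -/
def cAlpha (q α : ℝ) : ℝ :=
  Real.sqrt (qPochInf (-q ^ (-(2 * α + 1))) (q ^ 2) * qPochInf (-q ^ (2 * α + 3)) (q ^ 2) *
      qPochInf (q ^ (2 * α + 2)) (q ^ 2) /
    (2 * (1 - q) *
      (qPochInf (-q) (q ^ 2) * qPochInf (-q) (q ^ 2) * qPochInf (q ^ 2) (q ^ 2))))

/-- normalization constant `d_{n,α} = c_α q^{n²/2} (q;q)_{n,α}^{1/2} / (q;q)_n`. -/
def dAlpha (q α : ℝ) (n : ℕ) : ℝ :=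
  cAlpha q α * q ^ (((n : ℝ) ^ 2) / 2) * Real.sqrt (qPochAlpha q α n) / qPoch q q n

/-- the (q,α)-deformed Hermite functions `φ_n^α(x;q)`. -/
def phiQ (q α : ℝ) (n : ℕ) (x : ℝ) : ℝ :=
  dAlpha q α n * Real.sqrt (omegaAlpha q α x) * hTilde q α n x

/-- parity indicator `θ(n)`: 1 if `n` is odd, 0 if `n` is even. -/
def theta (n : ℕ) : ℝ := if n % 2 = 1 then 1 else 0

/-- the q-Gamma function `Γ_q(z) = (q;q)_∞ / (q^z;q)_∞ · (1-q)^{1-z}`. -/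
def qGammaF (q z : ℝ) : ℝ := qPochInf q q / qPochInf (q ^ z) q * (1 - q) ^ (1 - z)

/-- Rosenblum generalized factorial `γ_ν(n)`. -/
def gammaGen (ν : ℝ) (n : ℕ) : ℝ :=
  2 ^ n * (Nat.factorial (n / 2) : ℝ) *
    Real.Gamma (ν + (((n + 1) / 2 : ℕ) : ℝ) + 1 / 2) / Real.Gamma (ν + 1 / 2)

/-- generalized Hermite polynomials `H_n^ν(x)`. -/
def HGen (ν : ℝ) (n : ℕ) (x : ℝ) : ℝ :=
  (Nat.factorial n : ℝ) * ∑ k ∈ Finset.range (n / 2 + 1),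
    (-1 : ℝ) ^ k * (2 * x) ^ (n - 2 * k) / ((Nat.factorial k : ℝ) * gammaGen ν (n - 2 * k))

/-- Rosenblum generalized Hermite functions `φ_n^ν(x)`. -/
def phiGen (ν : ℝ) (n : ℕ) (x : ℝ) : ℝ :=
  Real.sqrt (gammaGen ν n / Real.Gamma (ν + 1 / 2)) * Real.exp (-x ^ 2 / 2) *
    HGen ν n x / ((2 : ℝ) ^ ((n : ℝ) / 2) * (Nat.factorial n : ℝ))

/-- symmetric q-number `[x]_s = (s^x - s^{-x})/(s - s^{-1})`. -/
def qNumSym (s x : ℝ) : ℝ := (s ^ x - s ^ (-x)) / (s - s⁻¹)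

/-- Euler q-exponential `e_q(z) = Σ z^k/(q;q)_k`. -/
def eExp (q z : ℝ) : ℝ := ∑' k : ℕ, z ^ k / qPoch q q k

/-- generalized q-exponential `E_{q,α}(z) = Σ q^{k(k-1)/2} z^k/(q;q)_{k,α}`. -/
def bigEAlpha (q α z : ℝ) : ℝ := ∑' k : ℕ, q ^ (k * (k - 1) / 2) * z ^ k / qPochAlpha q α k

/-- generalized q-exponential `e_{q,α}(z) = Σ z^k/(q;q)_{k,α}`. -/
def eExpAlpha (q α z : ℝ) : ℝ := ∑' k : ℕ, z ^ k / qPochAlpha q α k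

/-! ### Auxiliary lemmas for stmt_11 -/

lemma sqrtPow (a : ℝ) (ha : 0 ≤ a) (n : ℕ) :
    Real.sqrt (a ^ n) = Real.sqrt a ^ n := by
  rw [Real.sqrt_eq_rpow, Real.sqrt_eq_rpow, ← Real.rpow_natCast (a ^ ((1:ℝ)/2)) n,
    ← Real.rpow_natCast a n, ← Real.rpow_mul ha, ← Real.rpow_mul ha, mul_comm]

lemma qPochSame_pos {a : ℝ} (ha0 : 0 ≤ a) (ha1 : a < 1) (n : ℕ) : 0 < qPoch a a n := by
  apply Finset.prod_pos
  intro k _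
  have h1 : a ^ k ≤ 1 := pow_le_one₀ ha0 ha1.le
  nlinarith

/-- effective exponent in `⟦n⟧_{q,α}`. -/
def expA (α : ℝ) (n : ℕ) : ℝ := if n % 2 = 0 then (n : ℝ) else (n : ℝ) + 2 * α + 1

lemma expA_pos {α : ℝ} (hα : -1 < α) {n : ℕ} (hn : 1 ≤ n) : 0 < expA α n := by
  have h : (1 : ℝ) ≤ (n : ℝ) := by exact_mod_cast hn
  unfold expA
  split <;> linarith

lemma qNumAlpha_eq {q α : ℝ} (hq : q ≠ 1) (n : ℕ) :
    (1 - q) * qNumAlpha q α n = 1 - q ^ expA α n := by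
  have h1q : (1 : ℝ) - q ≠ 0 := sub_ne_zero.mpr (Ne.symm hq)
  unfold qNumAlpha qNumber expA
  split <;> (rw [mul_comm, div_mul_cancel₀ _ h1q])

lemma one_sub_q_expA_mem {q α : ℝ} (hq0 : 0 < q) (hq1 : q < 1) (hα : -1 < α)
    {n : ℕ} (hn : 1 ≤ n) : 0 < 1 - q ^ expA α n := by
  have := Real.rpow_lt_one hq0.le hq1 (expA_pos hα hn)
  linarith

lemma qNumAlpha_pos {q α : ℝ} (hq0 : 0 < q) (hq1 : q < 1) (hα : -1 < α)
    {n : ℕ} (hn : 1 ≤ n) : 0 < qNumAlpha q α n := by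
  have h1q : (0 : ℝ) < 1 - q := by linarith
  have h := qNumAlpha_eq (q := q) (α := α) hq1.ne n
  have h2 := one_sub_q_expA_mem hq0 hq1 hα hn
  nlinarith

lemma qFactAlpha_pos {q α : ℝ} (hq0 : 0 < q) (hq1 : q < 1) (hα : -1 < α)
    (n : ℕ) : 0 < qFactAlpha q α n := by
  apply Finset.prod_pos
  intro k _
  exact qNumAlpha_pos hq0 hq1 hα (Nat.le_add_left 1 k)

lemma qPochAlpha_pos {q α : ℝ} (hq0 : 0 < q) (hq1 : q < 1) (hα : -1 < α)
    (n : ℕ) : 0 < qPochAlpha q α n :=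
  mul_pos (pow_pos (by linarith) n) (qFactAlpha_pos hq0 hq1 hα n)

lemma qPochAlpha_succ {q α : ℝ} (hq : q ≠ 1) (m : ℕ) :
    qPochAlpha q α (m + 1) = qPochAlpha q α m * (1 - q ^ expA α (m + 1)) := by
  unfold qPochAlpha qFactAlpha
  rw [Finset.prod_range_succ, pow_succ, ← qNumAlpha_eq hq]
  ring

lemma tri_succ (m : ℕ) : (m + 1) * m / 2 = m * (m - 1) / 2 + m := by
  have h : (m + 1) * m = m * (m - 1) + 2 * m := by
    cases m with
    | zero => rfl
    | succ j => simp [Nat.succ_sub_one]; ring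
  rw [h, Nat.add_mul_div_left _ _ (by norm_num : 0 < 2)]

lemma tri_cast (m : ℕ) : ((m * (m - 1) / 2 : ℕ) : ℝ) = (m : ℝ) * ((m : ℝ) - 1) / 2 := by
  cases m with
  | zero => simp
  | succ j =>
    have h2 : 2 ∣ (j + 1) * ((j + 1) - 1) := by
      simp only [Nat.succ_sub_one]
      rw [Nat.mul_comm]
      exact (Nat.even_mul_succ_self j).two_dvd
    rw [Nat.cast_div h2 (by norm_num : (2:ℝ) ≠ 0)]
    push_cast [Nat.succ_sub_one]
    ring
lemma summable_A {q : ℝ} (hq0 : 0 < q) (hq1 : q < 1) {z : ℝ} (hz : |z| < 1) :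
    Summable (fun k : ℕ => z ^ k / qPoch (q ^ 2) (q ^ 2) k) := by
  have hq2 : q ^ 2 < 1 := by nlinarith
  have hq2' : (0 : ℝ) ≤ q ^ 2 := sq_nonneg q
  apply summable_of_ratio_norm_eventually_le (r := (|z| + 1) / 2) (by linarith)
  have htend : Filter.Tendsto (fun k : ℕ => |z| / (1 - q ^ 2 * (q ^ 2) ^ k)) atTop
      (nhds (|z| / (1 - q ^ 2 * 0))) := by
    apply Filter.Tendsto.div tendsto_const_nhds
    · exact tendsto_const_nhds.sub
        ((tendsto_pow_atTop_nhds_zero_of_lt_one hq2' hq2).const_mul _)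
    · simp only [mul_zero, sub_zero]; norm_num
  have hlt : |z| / (1 - q ^ 2 * 0) < (|z| + 1) / 2 := by
    simp only [mul_zero, sub_zero, div_one]; linarith
  filter_upwards [htend.eventually_lt_const hlt] with k hk
  have hpk : (q ^ 2) ^ k ≤ 1 := pow_le_one₀ hq2' hq2.le
  have hd : 0 < 1 - q ^ 2 * (q ^ 2) ^ k := by nlinarith
  have hP : 0 < qPoch (q ^ 2) (q ^ 2) k := qPochSame_pos hq2' hq2 k
  have hstep : z ^ (k + 1) / qPoch (q ^ 2) (q ^ 2) (k + 1)
      = (z / (1 - q ^ 2 * (q ^ 2) ^ k)) * (z ^ k / qPoch (q ^ 2) (q ^ 2) k) := by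
    unfold qPoch
    rw [Finset.prod_range_succ, pow_succ]
    unfold qPoch at hP
    field_simp
  rw [hstep, norm_mul, Real.norm_eq_abs, abs_div, abs_of_pos hd]
  have h0 : 0 ≤ ‖z ^ k / qPoch (q ^ 2) (q ^ 2) k‖ := norm_nonneg _
  exact mul_le_mul_of_nonneg_right hk.le h0

lemma summable_B {q α : ℝ} (hq0 : 0 < q) (hq1 : q < 1) (hα : -1 < α) (w : ℝ) :
    Summable (fun m : ℕ => q ^ (m * (m - 1) / 2) * w ^ m / qPochAlpha q α m) := by
  apply summable_of_ratio_norm_eventually_le (r := 1 / 2) (by norm_num)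
  set δ : ℝ := min (1 - q) (1 - q ^ (2 * α + 2 : ℝ)) with hδdef
  have hδ : 0 < δ := by
    apply lt_min (by linarith)
    have := Real.rpow_lt_one hq0.le hq1 (by linarith : (0:ℝ) < 2 * α + 2)
    linarith
  have hD : ∀ m : ℕ, δ ≤ 1 - q ^ expA α (m + 1) := by
    intro m
    unfold expA
    split
    · have h1 : q ^ ((m + 1 : ℕ) : ℝ) ≤ q ^ (1 : ℝ) := by
        apply Real.rpow_le_rpow_of_exponent_ge hq0 hq1.le
        push_cast; linarith
      rw [Real.rpow_one] at h1
      calc δ ≤ 1 - q := min_le_left _ _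
        _ ≤ 1 - q ^ ((m + 1 : ℕ) : ℝ) := by linarith
    · have h1 : q ^ (((m + 1 : ℕ) : ℝ) + 2 * α + 1) ≤ q ^ (2 * α + 2 : ℝ) := by
        apply Real.rpow_le_rpow_of_exponent_ge hq0 hq1.le
        push_cast; linarith
      calc δ ≤ 1 - q ^ (2 * α + 2 : ℝ) := min_le_right _ _
        _ ≤ 1 - q ^ (((m + 1 : ℕ) : ℝ) + 2 * α + 1) := by linarith
  have htend : Filter.Tendsto (fun m : ℕ => q ^ m * |w| / δ) atTop (nhds (0 * |w| / δ)) :=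
    (((tendsto_pow_atTop_nhds_zero_of_lt_one hq0.le hq1).mul_const _).div_const _)
  have hlt : 0 * |w| / δ < 1 / 2 := by simp
  filter_upwards [htend.eventually_lt_const hlt] with m hm
  have hDm : 0 < 1 - q ^ expA α (m + 1) := lt_of_lt_of_le hδ (hD m)
  have hPm : 0 < qPochAlpha q α m := qPochAlpha_pos hq0 hq1 hα m
  have hstep : q ^ ((m + 1) * ((m + 1) - 1) / 2) * w ^ (m + 1) / qPochAlpha q α (m + 1)
      = (q ^ m * w / (1 - q ^ expA α (m + 1)))
        * (q ^ (m * (m - 1) / 2) * w ^ m / qPochAlpha q α m) := by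
    rw [qPochAlpha_succ hq1.ne, Nat.succ_sub_one, tri_succ, pow_add, pow_succ]
    field_simp
  rw [hstep, norm_mul, Real.norm_eq_abs, abs_div, abs_of_pos hDm, abs_mul,
    abs_of_pos (pow_pos hq0 m)]
  have h0 : 0 ≤ ‖q ^ (m * (m - 1) / 2) * w ^ m / qPochAlpha q α m‖ := norm_nonneg _
  apply mul_le_mul_of_nonneg_right _ h0
  calc q ^ m * |w| / (1 - q ^ expA α (m + 1)) ≤ q ^ m * |w| / δ := by
        apply div_le_div_of_nonneg_left _ hδ (hD m)
        positivity
    _ ≤ 1 / 2 := hm.le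

/-- reindexing `(k, m) ↦ (n = m + 2k, k)`. -/
def pairEquiv : ℕ × ℕ ≃ (Σ n : ℕ, Fin (n / 2 + 1)) where
  toFun p := ⟨p.2 + 2 * p.1, ⟨p.1, by omega⟩⟩
  invFun s := (s.2.1, s.1 - 2 * s.2.1)
  left_inv p := by simp
  right_inv s := by
    obtain ⟨n, k⟩ := s
    have hk : 2 * (k : ℕ) ≤ n := by have := k.isLt; omega
    have hn : n - 2 * (k : ℕ) + 2 * (k : ℕ) = n := by omega
    apply Sigma.ext
    · simpa using hn
    · simp only
      rw [Fin.heq_ext_iff (by rw [hn])]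
lemma key_n (q α : ℝ) (hq0 : 0 < q) (hq1 : q < 1) (hα : -1 < α) (ζ x : ℝ) (n : ℕ) :
    ζ ^ n / Real.sqrt (qFactAlpha q α n) * phiQ q α n x
    = ∑ k ∈ Finset.range (n / 2 + 1),
        cAlpha q α * Real.sqrt (omegaAlpha q α x) *
          ((-(q * (1 - q) * ζ ^ 2)) ^ k / qPoch (q ^ 2) (q ^ 2) k *
            (q ^ ((n - 2 * k) * ((n - 2 * k) - 1) / 2) *
              (Real.sqrt q * Real.sqrt (1 - q) * x * ζ) ^ (n - 2 * k) /
                qPochAlpha q α (n - 2 * k))) := by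
  have h1q : (0:ℝ) < 1 - q := by linarith
  have hF : 0 < qFactAlpha q α n := qFactAlpha_pos hq0 hq1 hα n
  have hQ : 0 < qPoch q q n := qPochSame_pos hq0.le hq1 n
  have hsF : Real.sqrt (qFactAlpha q α n) ≠ 0 := (Real.sqrt_pos.mpr hF).ne'
  have hP : Real.sqrt (qPochAlpha q α n)
      = Real.sqrt (1 - q) ^ n * Real.sqrt (qFactAlpha q α n) := by
    unfold qPochAlpha
    rw [Real.sqrt_mul (pow_nonneg h1q.le n), sqrtPow _ h1q.le]
  unfold phiQ dAlpha hTilde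
  rw [hP]
  simp only [Finset.mul_sum]
  refine Finset.sum_congr rfl (fun k hk => ?_)
  have hk2 : 2 * k ≤ n := by
    have := Finset.mem_range.mp hk
    omega
  have hstep : ∀ T : ℝ,
      ζ ^ n / Real.sqrt (qFactAlpha q α n) *
        (cAlpha q α * q ^ (((n:ℝ) ^ 2) / 2) *
          (Real.sqrt (1 - q) ^ n * Real.sqrt (qFactAlpha q α n)) / qPoch q q n *
          Real.sqrt (omegaAlpha q α x) * (qPoch q q n * T))
      = cAlpha q α * Real.sqrt (omegaAlpha q α x) *
          (ζ ^ n * q ^ (((n:ℝ) ^ 2) / 2) * Real.sqrt (1 - q) ^ n * T) := by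
    intro T
    field_simp
  rw [hstep]
  congr 1
  obtain ⟨m, rfl⟩ : ∃ m, n = m + 2 * k := ⟨n - 2 * k, by omega⟩
  simp only [Nat.add_sub_cancel]
  rw [div_mul_div_comm, ← mul_div_assoc]
  congr 1
  -- numerator identity
  have hqpow : q ^ ((((m + 2 * k : ℕ)) : ℝ) ^ 2 / 2) *
        q ^ ((k * (2 * k + 1) : ℤ) - (2 * ((m + 2 * k : ℕ) : ℤ) * (k : ℤ)))
      = q ^ k * q ^ (m * (m - 1) / 2) * Real.sqrt q ^ m := by
    rw [← Real.rpow_intCast q ((k * (2 * k + 1) : ℤ) - (2 * ((m + 2 * k : ℕ) : ℤ) * (k : ℤ))),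
      ← Real.rpow_natCast q k, ← Real.rpow_natCast q (m * (m - 1) / 2),
      Real.sqrt_eq_rpow, ← Real.rpow_natCast (q ^ ((1:ℝ)/2)) m, ← Real.rpow_mul hq0.le,
      ← Real.rpow_add hq0, ← Real.rpow_add hq0, ← Real.rpow_add hq0]
    congr 1
    push_cast [tri_cast]
    ring
  have hz : (-(q * (1 - q) * ζ ^ 2)) ^ k
      = (-1:ℝ) ^ k * (q ^ k * (Real.sqrt (1 - q) ^ (2 * k) * ζ ^ (2 * k))) := by
    rw [pow_mul, pow_mul, Real.sq_sqrt h1q.le, neg_pow, mul_pow, mul_pow]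
    ring
  have hw : (Real.sqrt q * Real.sqrt (1 - q) * x * ζ) ^ m
      = Real.sqrt q ^ m * Real.sqrt (1 - q) ^ m * x ^ m * ζ ^ m := by
    rw [mul_pow, mul_pow, mul_pow]
  have hzeta : ζ ^ (m + 2 * k) = ζ ^ m * ζ ^ (2 * k) := pow_add ζ m (2 * k)
  have hs2 : Real.sqrt (1 - q) ^ (m + 2 * k)
      = Real.sqrt (1 - q) ^ m * Real.sqrt (1 - q) ^ (2 * k) := pow_add _ m (2 * k)
  rw [hz, hw, hzeta, hs2]
  linear_combination ((-1:ℝ) ^ k * ζ ^ m * ζ ^ (2 * k) * Real.sqrt (1 - q) ^ m *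
    Real.sqrt (1 - q) ^ (2 * k) * x ^ m) * hqpow
set_option maxHeartbeats 1000000 in
/-- closed form of the q-coherent state expansion. -/
theorem stmt_11 (q α : ℝ) (hq0 : 0 < q) (hq1 : q < 1) (hα : -1 < α)
    (ζ : ℝ) (hζ : q * (1 - q) * ζ ^ 2 < 1) (x : ℝ) :
    HasSum (fun n : ℕ => ζ ^ n / Real.sqrt (qFactAlpha q α n) * phiQ q α n x)
      (cAlpha q α * Real.sqrt (omegaAlpha q α x) * eExp (q ^ 2) (-(q * (1 - q) * ζ ^ 2)) *
        bigEAlpha q α (Real.sqrt q * Real.sqrt (1 - q) * x * ζ)) := by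
  have h1q : (0:ℝ) < 1 - q := by linarith
  set z : ℝ := -(q * (1 - q) * ζ ^ 2) with hzdef
  set w : ℝ := Real.sqrt q * Real.sqrt (1 - q) * x * ζ with hwdef
  set C : ℝ := cAlpha q α * Real.sqrt (omegaAlpha q α x) with hCdef
  have hznn : 0 ≤ q * (1 - q) * ζ ^ 2 := by positivity
  have habs : |z| < 1 := by
    rw [hzdef, abs_neg, abs_of_nonneg hznn]; exact hζ
  have hAs : Summable (fun k : ℕ => z ^ k / qPoch (q ^ 2) (q ^ 2) k) :=
    summable_A hq0 hq1 habs
  have hBs : Summable (fun m : ℕ => q ^ (m * (m - 1) / 2) * w ^ m / qPochAlpha q α m) :=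
    summable_B hq0 hq1 hα w
  have hA : HasSum (fun k : ℕ => z ^ k / qPoch (q ^ 2) (q ^ 2) k) (eExp (q ^ 2) z) :=
    hAs.hasSum
  have hB : HasSum (fun m : ℕ => q ^ (m * (m - 1) / 2) * w ^ m / qPochAlpha q α m)
      (bigEAlpha q α w) := hBs.hasSum
  have hprod0 : Summable (fun p : ℕ × ℕ =>
      (z ^ p.1 / qPoch (q ^ 2) (q ^ 2) p.1) *
        (q ^ (p.2 * (p.2 - 1) / 2) * w ^ p.2 / qPochAlpha q α p.2)) := by
    have hnA : Summable (fun k : ℕ => ‖z ^ k / qPoch (q ^ 2) (q ^ 2) k‖) := by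
      simpa only [Real.norm_eq_abs] using hAs.abs
    have hnB : Summable (fun m : ℕ =>
        ‖q ^ (m * (m - 1) / 2) * w ^ m / qPochAlpha q α m‖) := by
      simpa only [Real.norm_eq_abs] using hBs.abs
    exact summable_mul_of_summable_norm hnA hnB
  have hprod := (hA.mul hB hprod0).mul_left C
  have hsig : HasSum (fun s : Σ n : ℕ, Fin (n / 2 + 1) =>
      C * ((z ^ ((s.2 : ℕ)) / qPoch (q ^ 2) (q ^ 2) ((s.2 : ℕ))) *
        (q ^ ((s.1 - 2 * (s.2 : ℕ)) * ((s.1 - 2 * (s.2 : ℕ)) - 1) / 2) *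
          w ^ (s.1 - 2 * (s.2 : ℕ)) / qPochAlpha q α (s.1 - 2 * (s.2 : ℕ)))))
      (C * (eExp (q ^ 2) z * bigEAlpha q α w)) :=
    (Equiv.hasSum_iff pairEquiv.symm).mpr hprod
  have hfin := hsig.sigma (fun n => hasSum_fintype _)
  have hfun : (fun n : ℕ => ζ ^ n / Real.sqrt (qFactAlpha q α n) * phiQ q α n x)
      = fun n : ℕ => ∑ k : Fin (n / 2 + 1),
          C * ((z ^ ((k : ℕ)) / qPoch (q ^ 2) (q ^ 2) ((k : ℕ))) *
            (q ^ ((n - 2 * (k : ℕ)) * ((n - 2 * (k : ℕ)) - 1) / 2) *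
              w ^ (n - 2 * (k : ℕ)) / qPochAlpha q α (n - 2 * (k : ℕ)))) := by
    funext n
    rw [key_n q α hq0 hq1 hα ζ x n,
      ← Fin.sum_univ_eq_sum_range (fun k => C * ((z ^ k / qPoch (q ^ 2) (q ^ 2) k) *
        (q ^ ((n - 2 * k) * ((n - 2 * k) - 1) / 2) *
          w ^ (n - 2 * k) / qPochAlpha q α (n - 2 * k)))) (n / 2 + 1)]
  rw [hfun, mul_assoc]
  exact hfin
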